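/- For all n ≥ 1 and k ≥ 1, the probability that a uniformly random permutation of [n] has exactly k cycles is at most (1/n) · h_n^{k-1} / (k-1)!, where h_n = 1 + 1/2 + ... + 1/n. -/

import Mathlib

open Equiv Equiv.Perm Finset

def cycleCount {n : ℕ} (π : Equiv.Perm (Fin n)) : ℕ :=
  π.cycleType.card + (n - π.cycleType.sum)

open scoped Classical

noncomputable def orbitCount {n : ℕ} (π : Equiv.Perm (Fin n)) : ℕ :=
  Fintype.card (Quotient (Equiv.Perm.SameCycle.setoid π))

lemma sameCycle_fixed {α : Type*} {f : Equiv.Perm α} {x y : α} (hx : f x = x)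
    (h : f.SameCycle x y) : y = x := by
  obtain ⟨i, hi⟩ := h
  rw [Equiv.Perm.zpow_apply_eq_self_of_apply_eq_self hx] at hi
  exact hi.symm

lemma cycleCount_eq_orbitCount {n : ℕ} (π : Equiv.Perm (Fin n)) :
    cycleCount π = orbitCount π := by
  classical
  let f : Fin n → (↥π.cycleFactorsFinset) ⊕ (↥(Finset.univ.filter fun x : Fin n => π x = x)) :=
    fun x =>
      if h : π x = x then Sum.inr ⟨x, by simp [h]⟩
      else Sum.inl ⟨π.cycleOf x,
        Equiv.Perm.cycleOf_mem_cycleFactorsFinset_iff.2 (Equiv.Perm.mem_support.2 h)⟩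
  have hf : ∀ x y : Fin n, π.SameCycle x y → f x = f y := by
    intro x y hxy
    by_cases hx : π x = x
    · have : y = x := sameCycle_fixed hx hxy
      subst this; rfl
    · have hy : ¬ π y = y := by
        intro hy
        have hxy2 : x = y := sameCycle_fixed hy hxy.symm
        exact hx (by rw [hxy2]; exact hy)
      show (if _ : π x = x then _ else _) = (if _ : π y = y then _ else _)
      rw [dif_neg hx, dif_neg hy]
      exact congrArg Sum.inl (Subtype.ext hxy.cycleOf_eq)
  let Φ : Quotient (Equiv.Perm.SameCycle.setoid π) →
      (↥π.cycleFactorsFinset) ⊕ (↥(Finset.univ.filter fun x : Fin n => π x = x)) :=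
    Quotient.lift f hf
  have hinj : Function.Injective Φ := by
    intro q r h
    induction q using Quotient.ind with | _ x =>
    induction r using Quotient.ind with | _ y =>
    apply Quotient.sound
    show π.SameCycle x y
    have h : f x = f y := h
    by_cases hx : π x = x <;> by_cases hy : π y = y
    · have : y = x := by
        have := h
        simp only [f, dif_pos hx, dif_pos hy, Sum.inr.injEq, Subtype.mk.injEq] at this
        exact this.symm
      exact this ▸ Equiv.Perm.SameCycle.refl _ _
    · exact absurd h (by simp [f, dif_pos hx, dif_neg hy])
    · exact absurd h (by simp [f, dif_neg hx, dif_pos hy])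
    · simp only [f, dif_neg hx, dif_neg hy, Sum.inl.injEq, Subtype.mk.injEq] at h
      have : y ∈ (π.cycleOf x).support := by
        rw [h]
        exact Equiv.Perm.mem_support_cycleOf_iff.2
          ⟨Equiv.Perm.SameCycle.refl _ _, Equiv.Perm.mem_support.2 hy⟩
      exact (Equiv.Perm.mem_support_cycleOf_iff.1 this).1
  have hsurj : Function.Surjective Φ := by
    rintro (⟨c, hc⟩ | ⟨x, hx⟩)
    · obtain ⟨x, hx⟩ := (Equiv.Perm.mem_cycleFactorsFinset_iff.mp hc).1
      have hxs : x ∈ c.support := Equiv.Perm.mem_support.2 hx.1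
      have hcx : c = π.cycleOf x := Equiv.Perm.cycle_is_cycleOf hxs hc
      have hπx : π x ≠ x :=
        Equiv.Perm.mem_support.1 (Equiv.Perm.mem_cycleFactorsFinset_support_le hc hxs)
      refine ⟨Quotient.mk _ x, ?_⟩
      show f x = _
      simp only [f, dif_neg hπx]
      exact congrArg Sum.inl (Subtype.ext hcx.symm)
    · simp only [Finset.mem_filter] at hx
      refine ⟨Quotient.mk _ x, ?_⟩
      show f x = _
      simp only [f, dif_pos hx.2]
  have hcard : orbitCount π =
      Fintype.card ((↥π.cycleFactorsFinset) ⊕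
        (↥(Finset.univ.filter fun x : Fin n => π x = x))) :=
    Fintype.card_of_bijective ⟨hinj, hsurj⟩
  rw [cycleCount, hcard, Fintype.card_sum, Fintype.card_coe, Fintype.card_coe]
  have h1 : π.cycleType.card = π.cycleFactorsFinset.card := by
    rw [Equiv.Perm.cycleType_def]; simp
  have h2 : n - π.cycleType.sum = (Finset.univ.filter fun x : Fin n => π x = x).card := by
    rw [Equiv.Perm.sum_cycleType]
    have : (Finset.univ.filter fun x : Fin n => π x = x) = Finset.univ \ π.support := by
      ext x; simp [Equiv.Perm.mem_support, not_not]
    rw [this, Finset.card_sdiff_of_subset (Finset.subset_univ _)]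
    simp
  rw [h1, h2]
section DecomposeFin

variable {n : ℕ} (p : Fin (n + 1)) (e : Equiv.Perm (Fin n))

local notation "σ" => Equiv.Perm.decomposeFin.symm (p, e)

lemma sigma_zero : (σ : Equiv.Perm (Fin (n+1))) 0 = p :=
  Equiv.Perm.decomposeFin_symm_apply_zero p e

lemma sigma_succ (x : Fin n) : (σ : Equiv.Perm (Fin (n+1))) x.succ = Equiv.swap 0 p (e x).succ :=
  Equiv.Perm.decomposeFin_symm_apply_succ e p x

/-- forward trajectory claim -/
lemma sigma_pow_succ_exists (x : Fin n) (i : ℕ) :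
    ∃ j : ℕ, ((σ : Equiv.Perm (Fin (n+1))) ^ j) x.succ = ((e ^ i) x).succ := by
  induction i with
  | zero => exact ⟨0, rfl⟩
  | succ i ih =>
    obtain ⟨j, hj⟩ := ih
    have hstep : ((σ : Equiv.Perm (Fin (n+1))) ^ (j+1)) x.succ
        = Equiv.swap 0 p ((e ^ (i+1)) x).succ := by
      rw [pow_succ' (σ : Equiv.Perm (Fin (n+1))) j, Equiv.Perm.mul_apply, hj, sigma_succ]
      congr 2
      rw [pow_succ' e i, Equiv.Perm.mul_apply]
    by_cases hz : ((e ^ (i+1)) x).succ = p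
    · refine ⟨j + 2, ?_⟩
      have h1 : ((σ : Equiv.Perm (Fin (n+1))) ^ (j+1)) x.succ = 0 := by
        rw [hstep, hz, Equiv.swap_apply_right]
      rw [show j + 2 = (j+1) + 1 by ring, pow_succ' (σ : Equiv.Perm (Fin (n+1))) (j+1),
        Equiv.Perm.mul_apply, h1, sigma_zero, hz]
    · refine ⟨j + 1, ?_⟩
      rw [hstep, Equiv.swap_apply_of_ne_of_ne (Fin.succ_ne_zero _) hz]

lemma sigma_pow_succ_cases (x : Fin n) (j : ℕ) :
    (∃ i : ℕ, ((σ : Equiv.Perm (Fin (n+1))) ^ j) x.succ = ((e ^ i) x).succ) ∨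
      (((σ : Equiv.Perm (Fin (n+1))) ^ j) x.succ = 0 ∧ ∃ i : ℕ, p = ((e ^ i) x).succ) := by
  induction j with
  | zero => exact Or.inl ⟨0, rfl⟩
  | succ j ih =>
    rw [pow_succ' (σ : Equiv.Perm (Fin (n+1))) j, Equiv.Perm.mul_apply]
    rcases ih with ⟨i, hi⟩ | ⟨h0, i, hp⟩
    · rw [hi, sigma_succ]
      by_cases hz : ((e ^ (i+1)) x).succ = p
      · refine Or.inr ⟨?_, i + 1, hz.symm⟩
        rw [show (e ((e ^ i) x)).succ = ((e ^ (i+1)) x).succ by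
          rw [pow_succ' e i, Equiv.Perm.mul_apply], hz, Equiv.swap_apply_right]
      · refine Or.inl ⟨i + 1, ?_⟩
        rw [show (e ((e ^ i) x)).succ = ((e ^ (i+1)) x).succ by
          rw [pow_succ' e i, Equiv.Perm.mul_apply],
          Equiv.swap_apply_of_ne_of_ne (Fin.succ_ne_zero _) hz]
    · rw [h0, sigma_zero]
      exact Or.inl ⟨i, hp⟩

lemma sameCycle_succ_iff (x y : Fin n) :
    (σ : Equiv.Perm (Fin (n+1))).SameCycle x.succ y.succ ↔ e.SameCycle x y := by
  constructor
  · intro h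
    obtain ⟨j, hj, hje⟩ := h.exists_pow_eq'
    rcases sigma_pow_succ_cases p e x j with ⟨i, hi⟩ | ⟨h0, _⟩
    · rw [hje] at hi
      exact ⟨i, by rw [zpow_natCast, ← Fin.succ_inj.mp hi.symm]⟩
    · rw [hje] at h0
      exact absurd h0 (Fin.succ_ne_zero _)
  · intro h
    obtain ⟨i, hi, hie⟩ := h.exists_pow_eq'
    obtain ⟨j, hj⟩ := sigma_pow_succ_exists p e x i
    exact ⟨j, by rw [zpow_natCast, hj, hie]⟩

end DecomposeFin
lemma orbitCount_decomposeFin {n : ℕ} (p : Fin (n + 1)) (e : Equiv.Perm (Fin n)) :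
    orbitCount (Equiv.Perm.decomposeFin.symm (p, e)) =
      orbitCount e + if p = 0 then 1 else 0 := by
  classical
  set σ := Equiv.Perm.decomposeFin.symm (p, e) with hσ
  let Φ : Quotient (Equiv.Perm.SameCycle.setoid e) →
      Quotient (Equiv.Perm.SameCycle.setoid σ) :=
    Quotient.lift (fun x => Quotient.mk (Equiv.Perm.SameCycle.setoid σ) x.succ)
      (fun x y h => Quotient.sound ((sameCycle_succ_iff p e x y).2 h))
  have hinj : Function.Injective Φ := by
    intro q r h
    induction q using Quotient.ind with | _ x =>
    induction r using Quotient.ind with | _ y =>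
    exact Quotient.sound ((sameCycle_succ_iff p e x y).1 (Quotient.exact h))
  by_cases hp : p = 0
  · -- 0 is a fixed point of σ; quotient has one extra class
    rw [if_pos hp]
    have hfix : σ 0 = 0 := by rw [hσ, sigma_zero, hp]
    have hnot : Quotient.mk (Equiv.Perm.SameCycle.setoid σ) 0 ∉ Finset.univ.image Φ := by
      simp only [Finset.mem_image, Finset.mem_univ, true_and]
      rintro ⟨q, hq⟩
      induction q using Quotient.ind with | _ x =>
      have : (x.succ : Fin (n+1)) = 0 :=
        sameCycle_fixed hfix (Quotient.exact hq).symm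
      exact Fin.succ_ne_zero x this
    have huniv : (Finset.univ : Finset (Quotient (Equiv.Perm.SameCycle.setoid σ))) =
        insert (Quotient.mk (Equiv.Perm.SameCycle.setoid σ) 0) (Finset.univ.image Φ) := by
      ext q
      simp only [Finset.mem_univ, true_iff, Finset.mem_insert, Finset.mem_image]
      induction q using Quotient.ind with | _ x =>
      induction x using Fin.cases with
      | zero => exact Or.inl rfl
      | succ y => exact Or.inr ⟨Quotient.mk _ y, trivial, rfl⟩
    rw [orbitCount, orbitCount, ← Finset.card_univ, huniv,
      Finset.card_insert_of_notMem hnot, Finset.card_image_of_injective _ hinj,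
      Finset.card_univ]
  · -- Φ is surjective
    rw [if_neg hp]
    have hsurj : Function.Surjective Φ := by
      intro q
      induction q using Quotient.ind with | _ x =>
      induction x using Fin.cases with
      | zero =>
        refine ⟨Quotient.mk _ (p.pred hp), Quotient.sound ?_⟩
        show σ.SameCycle (p.pred hp).succ 0
        refine Equiv.Perm.SameCycle.symm ⟨1, ?_⟩
        rw [zpow_one, hσ, sigma_zero, Fin.succ_pred]
      | succ y => exact ⟨Quotient.mk _ y, rfl⟩
    rw [orbitCount, orbitCount, Nat.add_zero]
    exact (Fintype.card_of_bijective ⟨hinj, hsurj⟩).symm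
lemma cycleCount_decomposeFin {n : ℕ} (p : Fin (n + 1)) (e : Equiv.Perm (Fin n)) :
    cycleCount (Equiv.Perm.decomposeFin.symm (p, e)) =
      cycleCount e + if p = 0 then 1 else 0 := by
  rw [cycleCount_eq_orbitCount, cycleCount_eq_orbitCount, orbitCount_decomposeFin]

noncomputable def C (n k : ℕ) : ℕ :=
  (Finset.univ.filter (fun π : Equiv.Perm (Fin n) => cycleCount π = k)).card

lemma cycleCount_pos {n : ℕ} (hn : 1 ≤ n) (π : Equiv.Perm (Fin n)) : 0 < cycleCount π := by
  rw [cycleCount]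
  rcases eq_or_ne π 1 with rfl | h
  · have : Equiv.Perm.cycleType (1 : Equiv.Perm (Fin n)) = 0 := Equiv.Perm.cycleType_one
    rw [this]
    simpa using (show 0 < n by omega)
  · have := Equiv.Perm.card_cycleType_pos.2 h
    omega

lemma C_zero {n : ℕ} (hn : 1 ≤ n) : C n 0 = 0 := by
  rw [C, Finset.card_eq_zero, Finset.filter_eq_empty_iff]
  intro π _
  exact (cycleCount_pos hn π).ne'

lemma C_one_k (k : ℕ) : C 1 k = if k = 1 then 1 else 0 := by
  have hc1 : ∀ π : Equiv.Perm (Fin 1), cycleCount π = 1 := by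
    intro π
    have hπ : π = 1 := Subsingleton.elim _ _
    subst hπ
    rw [cycleCount, Equiv.Perm.cycleType_one]
    simp
  rw [C]
  by_cases hk : k = 1
  · subst hk
    rw [if_pos rfl]
    have : (Finset.univ.filter (fun π : Equiv.Perm (Fin 1) => cycleCount π = 1)) =
        Finset.univ := by
      rw [Finset.filter_eq_self]; intro π _; exact hc1 π
    rw [this, Finset.card_univ]
    simp
  · rw [if_neg hk, Finset.card_eq_zero, Finset.filter_eq_empty_iff]
    intro π _
    rw [hc1 π]
    exact fun h => hk h.symm

lemma C_rec (n k : ℕ) (hk : 1 ≤ k) : C (n+1) k = C n (k-1) + n * C n k := by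
  classical
  have h1 : C (n+1) k = (Finset.univ.filter
      (fun pe : Fin (n+1) × Equiv.Perm (Fin n) =>
        cycleCount (Equiv.Perm.decomposeFin.symm pe) = k)).card := by
    rw [C]
    apply Finset.card_equiv Equiv.Perm.decomposeFin
    intro π
    simp only [Finset.mem_filter, Finset.mem_univ, true_and, Equiv.symm_apply_apply]
  rw [h1, Finset.card_filter, Fintype.sum_prod_type, Fin.sum_univ_succ]
  have h2 : ∀ e : Equiv.Perm (Fin n),
      (if cycleCount (Equiv.Perm.decomposeFin.symm ((0 : Fin (n+1)), e)) = k then 1 else 0) =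
      (if cycleCount e = k - 1 then 1 else 0) := by
    intro e
    rw [cycleCount_decomposeFin, if_pos rfl]
    congr 1
    simp only [eq_iff_iff]
    omega
  have h3 : ∀ (i : Fin n) (e : Equiv.Perm (Fin n)),
      (if cycleCount (Equiv.Perm.decomposeFin.symm (i.succ, e)) = k then 1 else 0) =
      (if cycleCount e = k then 1 else 0) := by
    intro i e
    rw [cycleCount_decomposeFin, if_neg (Fin.succ_ne_zero i), Nat.add_zero]
  simp only [h2, h3]
  rw [Finset.sum_const, ← Finset.card_filter, ← Finset.card_filter]
  simp [C, Finset.card_univ, mul_comm]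
noncomputable def H (m : ℕ) : ℝ := ∑ j ∈ Finset.Icc 1 m, (1 : ℝ) / j

lemma H_nonneg (m : ℕ) : 0 ≤ H m :=
  Finset.sum_nonneg fun j _ => by positivity

lemma H_succ (m : ℕ) : H (m + 1) = H m + 1 / (m + 1) := by
  rw [H, H, Finset.sum_Icc_succ_top (by omega : 1 ≤ m + 1)]
  push_cast
  ring

lemma H_mono {a b : ℕ} (h : a ≤ b) : H a ≤ H b := by
  apply Finset.sum_le_sum_of_subset_of_nonneg
  · exact Finset.Icc_subset_Icc_right h
  · intro j _ _; positivity

lemma two_term_binomial (a x : ℝ) (ha : 0 ≤ a) (hx : 0 ≤ x) (m : ℕ) (hm : 1 ≤ m) :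
    a ^ m + m * x * a ^ (m - 1) ≤ (a + x) ^ m := by
  obtain ⟨t, rfl⟩ : ∃ t, m = t + 1 := ⟨m - 1, by omega⟩
  rw [add_pow]
  have hsub : ({t, t + 1} : Finset ℕ) ⊆ Finset.range (t + 2) := by
    intro i hi
    simp only [Finset.mem_insert, Finset.mem_singleton] at hi
    rcases hi with rfl | rfl <;> simp [Finset.mem_range] <;> omega
  have hpair : ∑ i ∈ ({t, t + 1} : Finset ℕ),
      a ^ i * x ^ (t + 1 - i) * ((t+1).choose i : ℝ)
      = a ^ (t+1) + (t+1 : ℕ) * x * a ^ t := by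
    rw [Finset.sum_pair (by omega : t ≠ t + 1)]
    have h1 : (t + 1).choose t = t + 1 := Nat.choose_succ_self_right t
    have h2 : (t + 1).choose (t + 1) = 1 := Nat.choose_self _
    rw [h1, h2]
    have h3 : t + 1 - t = 1 := by omega
    rw [h3, Nat.sub_self]
    push_cast
    ring
  calc a ^ (t + 1) + (↑(t + 1) : ℝ) * x * a ^ (t + 1 - 1)
      = ∑ i ∈ ({t, t + 1} : Finset ℕ),
          a ^ i * x ^ (t + 1 - i) * ((t+1).choose i : ℝ) := by
        rw [hpair]; push_cast; ring_nf
    _ ≤ ∑ i ∈ Finset.range (t + 2), a ^ i * x ^ (t + 1 - i) * ((t+1).choose i : ℝ) := by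
        apply Finset.sum_le_sum_of_subset_of_nonneg hsub
        intro i _ _
        positivity

lemma key_bound : ∀ n, 1 ≤ n → ∀ k, 1 ≤ k →
    (C n k : ℝ) * (Nat.factorial (k - 1)) ≤ (Nat.factorial (n - 1)) * H (n - 1) ^ (k - 1) := by
  intro n hn
  induction n, hn using Nat.le_induction with
  | base =>
    intro k hk
    rcases eq_or_ne k 1 with rfl | hk1
    · rw [C_one_k, if_pos rfl]
      norm_num [H]
    · rw [C_one_k, if_neg hk1]
      simp only [Nat.cast_zero, zero_mul]
      exact mul_nonneg (by positivity) (pow_nonneg (H_nonneg 0) _)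
  | succ n hn ih =>
    obtain ⟨m, rfl⟩ : ∃ m, n = m + 1 := ⟨n - 1, by omega⟩
    intro k hk
    have hm1 : (0:ℝ) < (m:ℝ) + 1 := by positivity
    rcases eq_or_ne k 1 with rfl | hk1
    · -- k = 1
      rw [C_rec _ _ le_rfl, C_zero (by omega : 1 ≤ m + 1), Nat.zero_add]
      have ih1 := ih 1 le_rfl
      simp only [Nat.sub_self, Nat.factorial_zero, Nat.cast_one, mul_one, pow_zero,
        show m + 1 - 1 = m from rfl] at ih1 ⊢
      rw [show m + 2 - 1 = m + 1 from rfl]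
      push_cast [Nat.factorial_succ]
      nlinarith [ih1]
    · -- k ≥ 2
      obtain ⟨j, rfl⟩ : ∃ j, k = j + 2 := ⟨k - 2, by omega⟩
      rw [C_rec _ _ (by omega)]
      have ihj1 := ih (j + 1) (by omega)
      have ihj2 := ih (j + 2) (by omega)
      simp only [show j + 1 - 1 = j from rfl, show j + 2 - 1 = j + 1 from rfl,
        show m + 1 - 1 = m from rfl, show m + 2 - 1 = m + 1 from rfl] at ihj1 ihj2 ⊢
      have hHs : H (m + 1) = H m + 1 / ((m:ℝ) + 1) := H_succ m
      have hbin := two_term_binomial (H m) (1 / ((m:ℝ) + 1)) (H_nonneg m)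
        (by positivity) (j + 1) (by omega)
      simp only [show j + 1 - 1 = j from rfl] at hbin
      push_cast at hbin
      have hfactj : (Nat.factorial (j + 1) : ℝ) = ((j:ℝ) + 1) * Nat.factorial j := by
        rw [Nat.factorial_succ]; push_cast; ring
      have hfact2 : (Nat.factorial (m + 1) : ℝ) = ((m:ℝ) + 1) * Nat.factorial m := by
        rw [Nat.factorial_succ]; push_cast; ring
      have hfj : (0:ℝ) < (Nat.factorial j : ℝ) := by positivity
      have hfm : (0:ℝ) < (Nat.factorial m : ℝ) := by positivity
      rw [hfactj] at ihj2
      have e1 : ((j:ℝ) + 1) * ((C (m+1) (j+1) : ℝ) * (Nat.factorial j : ℝ))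
          ≤ ((j:ℝ) + 1) * ((Nat.factorial m : ℝ) * H m ^ j) :=
        mul_le_mul_of_nonneg_left ihj1 (by positivity)
      have e2 : ((m:ℝ) + 1) * ((C (m+1) (j+2) : ℝ) * (((j:ℝ) + 1) * (Nat.factorial j : ℝ)))
          ≤ ((m:ℝ) + 1) * ((Nat.factorial m : ℝ) * H m ^ (j+1)) :=
        mul_le_mul_of_nonneg_left ihj2 hm1.le
      have hb3 := mul_le_mul_of_nonneg_left hbin
        (by positivity : (0:ℝ) ≤ ((m:ℝ)+1) * (Nat.factorial m : ℝ))
      have hb4 : ((m:ℝ)+1) * (Nat.factorial m : ℝ)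
            * (H m ^ (j+1) + ((j:ℝ)+1) * (1/((m:ℝ)+1)) * H m ^ j)
          = ((m:ℝ)+1) * (Nat.factorial m : ℝ) * H m ^ (j+1)
            + ((j:ℝ)+1) * (Nat.factorial m : ℝ) * H m ^ j := by
        field_simp
      rw [hHs, hfactj]
      push_cast
      rw [hfact2]
      linarith [e1, e2, hb3, hb4]
open scoped Classical in
/-- For `n, k ≥ 1`, the probability that a uniformly random permutation of `[n]`
has exactly `k` cycles is at most `(1/n) · h_n^{k-1}/(k-1)!`. -/
theorem stmt6 (n k : ℕ) (hn : 1 ≤ n) (hk : 1 ≤ k) :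
    ((Finset.univ.filter (fun π : Equiv.Perm (Fin n) => cycleCount π = k)).card : ℝ)
        / Nat.factorial n ≤
      (1 / (n : ℝ)) * (∑ j ∈ Finset.Icc 1 n, (1 : ℝ) / j) ^ (k - 1)
        / Nat.factorial (k - 1) := by
  obtain ⟨m, rfl⟩ : ∃ m, n = m + 1 := ⟨n - 1, by omega⟩
  have hkey := key_bound (m + 1) (by omega) k hk
  rw [show m + 1 - 1 = m from rfl] at hkey
  have hmono : H m ^ (k - 1) ≤ H (m + 1) ^ (k - 1) :=
    pow_le_pow_left₀ (H_nonneg m) (H_mono (by omega)) _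
  have h2 : (C (m+1) k : ℝ) * (Nat.factorial (k-1)) ≤ (Nat.factorial m) * H (m+1) ^ (k-1) :=
    hkey.trans (mul_le_mul_of_nonneg_left hmono (by positivity))
  have hC : ((Finset.univ.filter
      (fun π : Equiv.Perm (Fin (m+1)) => cycleCount π = k)).card : ℝ) = (C (m+1) k : ℝ) := rfl
  rw [hC, div_le_div_iff₀ (by positivity) (by positivity)]
  have hHs : (∑ j ∈ Finset.Icc 1 (m+1), (1:ℝ)/j) = H (m+1) := rfl
  rw [hHs]
  have hfact : (Nat.factorial (m+1) : ℝ) = (((m:ℕ):ℝ) + 1) * Nat.factorial m := by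
    rw [Nat.factorial_succ]; push_cast; ring
  have hcast : ((m + 1 : ℕ) : ℝ) = ((m:ℕ):ℝ) + 1 := by push_cast; ring
  have heq : 1 / ((m + 1 : ℕ) : ℝ) * H (m+1) ^ (k-1) * Nat.factorial (m+1)
      = (Nat.factorial m : ℝ) * H (m+1) ^ (k-1) := by
    rw [hfact, hcast]
    have h0 : (((m:ℕ):ℝ) + 1) ≠ 0 := by positivity
    field_simp
  rw [heq]
  exact h2
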